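/- Let X be a finite index set. For each i ∈ X, let I_i be an m × m real symmetric positive semidefinite matrix, and let I_x be an m × m real symmetric positive definite matrix. Define the E-optimality set function f^E(S) = λ_min(I_x + Σ_{i∈S} I_i) − λ_min(I_x) for S ⊆ X, and write f^E_j(S) = f^E(S ∪ {j}) − f^E(S). Then for all S ⊆ T ⊂ X and j ∈ X \ T such that I_j is positive definite (equivalently λ_min(I_j) > 0), it holds that f^E_j(T) ≤ (λ_max(I_j) / λ_min(I_j)) · f^E_j(S). -/

import Mathlib

open Finset Matrix

noncomputable def lambdaMin {m : ℕ} (A : Matrix (Fin m) (Fin m) ℝ) : ℝ :=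
  sInf (spectrum ℝ A)

noncomputable def lambdaMax {m : ℕ} (A : Matrix (Fin m) (Fin m) ℝ) : ℝ :=
  sSup (spectrum ℝ A)

section Aux

variable {m : ℕ}

lemma lambdaMin_eq {A : Matrix (Fin m) (Fin m) ℝ} (hA : A.IsHermitian) :
    lambdaMin A = sInf (Set.range hA.eigenvalues) := by
  rw [lambdaMin, hA.spectrum_real_eq_range_eigenvalues]

lemma lambdaMax_eq {A : Matrix (Fin m) (Fin m) ℝ} (hA : A.IsHermitian) :
    lambdaMax A = sSup (Set.range hA.eigenvalues) := by
  rw [lambdaMax, hA.spectrum_real_eq_range_eigenvalues]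

lemma lambdaMin_le_eig [Nonempty (Fin m)] {A : Matrix (Fin m) (Fin m) ℝ}
    (hA : A.IsHermitian) (i : Fin m) : lambdaMin A ≤ hA.eigenvalues i := by
  rw [lambdaMin_eq hA]
  exact csInf_le (Set.finite_range _).bddBelow ⟨i, rfl⟩

lemma eig_le_lambdaMax [Nonempty (Fin m)] {A : Matrix (Fin m) (Fin m) ℝ}
    (hA : A.IsHermitian) (i : Fin m) : hA.eigenvalues i ≤ lambdaMax A := by
  rw [lambdaMax_eq hA]
  exact le_csSup (Set.finite_range _).bddAbove ⟨i, rfl⟩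

lemma exists_eig_eq_lambdaMin [Nonempty (Fin m)] {A : Matrix (Fin m) (Fin m) ℝ}
    (hA : A.IsHermitian) : ∃ i, hA.eigenvalues i = lambdaMin A := by
  have := (Set.range_nonempty hA.eigenvalues).csInf_mem (Set.finite_range _)
  rw [← lambdaMin_eq hA] at this
  exact this

lemma sub_smul_one_posSemidef {A : Matrix (Fin m) (Fin m) ℝ} (hA : A.IsHermitian)
    {c : ℝ} (hc : ∀ i, c ≤ hA.eigenvalues i) : (A - c • 1).PosSemidef := by
  have h : A - c • (1 : Matrix (Fin m) (Fin m) ℝ)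
      = (hA.eigenvectorUnitary : Matrix (Fin m) (Fin m) ℝ) *
        (diagonal (fun i => hA.eigenvalues i - c)) *
        (hA.eigenvectorUnitary : Matrix (Fin m) (Fin m) ℝ)ᴴ := by
    have hU : (hA.eigenvectorUnitary : Matrix (Fin m) (Fin m) ℝ) *
        star (hA.eigenvectorUnitary : Matrix (Fin m) (Fin m) ℝ) = 1 :=
      (Matrix.mem_unitaryGroup_iff).mp hA.eigenvectorUnitary.2
    have hd : (diagonal (fun i => hA.eigenvalues i - c))
        = diagonal (RCLike.ofReal ∘ hA.eigenvalues) - c • (1 : Matrix (Fin m) (Fin m) ℝ) := by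
      rw [Matrix.smul_one_eq_diagonal, diagonal_sub]
      rfl
    rw [hd, Matrix.mul_sub, Matrix.sub_mul, ← Matrix.star_eq_conjTranspose]
    conv_lhs => rw [hA.spectral_theorem]
    rw [Unitary.conjStarAlgAut_apply]
    congr 1
    rw [Matrix.mul_smul, Matrix.smul_mul, mul_one, hU]
  rw [h]
  exact (Matrix.PosSemidef.diagonal (fun i => by simpa using hc i)).mul_mul_conjTranspose_same _

lemma smul_one_sub_posSemidef {A : Matrix (Fin m) (Fin m) ℝ} (hA : A.IsHermitian)
    {c : ℝ} (hc : ∀ i, hA.eigenvalues i ≤ c) : (c • 1 - A).PosSemidef := by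
  have h : c • (1 : Matrix (Fin m) (Fin m) ℝ) - A
      = (hA.eigenvectorUnitary : Matrix (Fin m) (Fin m) ℝ) *
        (diagonal (fun i => c - hA.eigenvalues i)) *
        (hA.eigenvectorUnitary : Matrix (Fin m) (Fin m) ℝ)ᴴ := by
    have hU : (hA.eigenvectorUnitary : Matrix (Fin m) (Fin m) ℝ) *
        star (hA.eigenvectorUnitary : Matrix (Fin m) (Fin m) ℝ) = 1 :=
      (Matrix.mem_unitaryGroup_iff).mp hA.eigenvectorUnitary.2
    have hd : (diagonal (fun i => c - hA.eigenvalues i))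
        = c • (1 : Matrix (Fin m) (Fin m) ℝ) - diagonal (RCLike.ofReal ∘ hA.eigenvalues) := by
      rw [Matrix.smul_one_eq_diagonal, diagonal_sub]
      rfl
    rw [hd, Matrix.mul_sub, Matrix.sub_mul, ← Matrix.star_eq_conjTranspose]
    conv_lhs => rw [hA.spectral_theorem]
    rw [Unitary.conjStarAlgAut_apply]
    congr 1
    rw [Matrix.mul_smul, Matrix.smul_mul, mul_one, hU]
  rw [h]
  exact (Matrix.PosSemidef.diagonal (fun i => by simpa using hc i)).mul_mul_conjTranspose_same _

lemma rayleigh_lower [Nonempty (Fin m)] {A : Matrix (Fin m) (Fin m) ℝ} (hA : A.IsHermitian)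
    (v : Fin m → ℝ) : lambdaMin A * (v ⬝ᵥ v) ≤ v ⬝ᵥ (A *ᵥ v) := by
  have h := (sub_smul_one_posSemidef hA (lambdaMin_le_eig hA)).dotProduct_mulVec_nonneg v
  simpa [sub_mulVec, dotProduct_sub, smul_mulVec, dotProduct_smul, sub_nonneg,
    smul_eq_mul, star_trivial] using h

lemma rayleigh_upper [Nonempty (Fin m)] {A : Matrix (Fin m) (Fin m) ℝ} (hA : A.IsHermitian)
    (v : Fin m → ℝ) : v ⬝ᵥ (A *ᵥ v) ≤ lambdaMax A * (v ⬝ᵥ v) := by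
  have h := (smul_one_sub_posSemidef hA (eig_le_lambdaMax hA)).dotProduct_mulVec_nonneg v
  simpa [sub_mulVec, dotProduct_sub, smul_mulVec, dotProduct_smul, sub_nonneg,
    smul_eq_mul, star_trivial] using h

lemma dotProduct_self_pos {v : Fin m → ℝ} (hv : v ≠ 0) : 0 < v ⬝ᵥ v := by
  have h0 : 0 ≤ v ⬝ᵥ v := Finset.sum_nonneg fun i _ => mul_self_nonneg _
  rcases h0.lt_or_eq with h | h
  · exact h
  · exact absurd (dotProduct_self_eq_zero.mp h.symm) hv

lemma lambdaMin_add_ge [Nonempty (Fin m)] {A B : Matrix (Fin m) (Fin m) ℝ}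
    (hA : A.IsHermitian) (hB : B.IsHermitian) :
    lambdaMin A + lambdaMin B ≤ lambdaMin (A + B) := by
  have hAB : (A + B).IsHermitian := hA.add hB
  obtain ⟨i, hi⟩ := exists_eig_eq_lambdaMin hAB
  set v : Fin m → ℝ := ⇑(hAB.eigenvectorBasis i) with hv
  have hv0 : v ≠ 0 := by
    have := hAB.eigenvectorBasis.orthonormal.ne_zero i
    intro h
    apply this
    ext k
    exact congrFun h k
  have hvv : 0 < v ⬝ᵥ v := dotProduct_self_pos hv0
  have hev : (A + B) *ᵥ v = hAB.eigenvalues i • v := hAB.mulVec_eigenvectorBasis i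
  have key : v ⬝ᵥ ((A + B) *ᵥ v) = lambdaMin (A + B) * (v ⬝ᵥ v) := by
    rw [hev, dotProduct_smul, smul_eq_mul, hi]
  have h1 := rayleigh_lower hA v
  have h2 := rayleigh_lower hB v
  have h3 : v ⬝ᵥ ((A + B) *ᵥ v) = v ⬝ᵥ (A *ᵥ v) + v ⬝ᵥ (B *ᵥ v) := by
    rw [add_mulVec, dotProduct_add]
  nlinarith

lemma lambdaMin_add_le [Nonempty (Fin m)] {A B : Matrix (Fin m) (Fin m) ℝ}
    (hA : A.IsHermitian) (hB : B.IsHermitian) :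
    lambdaMin (A + B) ≤ lambdaMin A + lambdaMax B := by
  have hAB : (A + B).IsHermitian := hA.add hB
  obtain ⟨i, hi⟩ := exists_eig_eq_lambdaMin hA
  set v : Fin m → ℝ := ⇑(hA.eigenvectorBasis i) with hv
  have hv0 : v ≠ 0 := by
    have := hA.eigenvectorBasis.orthonormal.ne_zero i
    intro h
    apply this
    ext k
    exact congrFun h k
  have hvv : 0 < v ⬝ᵥ v := dotProduct_self_pos hv0
  have hev : A *ᵥ v = hA.eigenvalues i • v := hA.mulVec_eigenvectorBasis i
  have key : v ⬝ᵥ (A *ᵥ v) = lambdaMin A * (v ⬝ᵥ v) := by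
    rw [hev, dotProduct_smul, smul_eq_mul, hi]
  have h1 := rayleigh_lower hAB v
  have h2 := rayleigh_upper hB v
  have h3 : v ⬝ᵥ ((A + B) *ᵥ v) = v ⬝ᵥ (A *ᵥ v) + v ⬝ᵥ (B *ᵥ v) := by
    rw [add_mulVec, dotProduct_add]
  nlinarith

lemma lambdaMin_pos [Nonempty (Fin m)] {A : Matrix (Fin m) (Fin m) ℝ}
    (hA : A.PosDef) : 0 < lambdaMin A := by
  obtain ⟨i, hi⟩ := exists_eig_eq_lambdaMin hA.1
  rw [← hi]
  exact hA.eigenvalues_pos i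

lemma lambdaMin_le_lambdaMax [Nonempty (Fin m)] {A : Matrix (Fin m) (Fin m) ℝ}
    (hA : A.IsHermitian) : lambdaMin A ≤ lambdaMax A := by
  obtain ⟨i⟩ := ‹Nonempty (Fin m)›
  exact (lambdaMin_le_eig hA i).trans (eig_le_lambdaMax hA i)

end Aux

theorem stmt_11 {ι : Type*} [Fintype ι] [DecidableEq ι] {m : ℕ}
    (I : ι → Matrix (Fin m) (Fin m) ℝ) (hI : ∀ i, (I i).PosSemidef)
    (Ix : Matrix (Fin m) (Fin m) ℝ) (hIx : Ix.PosDef)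
    (fE : Finset ι → ℝ)
    (hfE : ∀ S : Finset ι,
      fE S = lambdaMin (Ix + ∑ i ∈ S, I i) - lambdaMin Ix) :
    ∀ (S T : Finset ι) (j : ι), S ⊆ T → j ∉ T → (I j).PosDef →
      fE (insert j T) - fE T ≤
        (lambdaMax (I j) / lambdaMin (I j)) * (fE (insert j S) - fE S) := by
  intro S T j hST hjT hj
  rcases Nat.eq_zero_or_pos m with hm | hm
  · subst hm
    have hz : ∀ A : Matrix (Fin 0) (Fin 0) ℝ, lambdaMin A = 0 := by
      intro A
      have hA : A.IsHermitian := Subsingleton.elim _ _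
      rw [lambdaMin_eq hA, Set.range_eq_empty, Real.sInf_empty]
    simp [hfE, hz]
  haveI : Nonempty (Fin m) := ⟨⟨0, hm⟩⟩
  have hjS : j ∉ S := fun h => hjT (hST h)
  -- Hermitian facts
  have hSum : ∀ U : Finset ι, (∑ i ∈ U, I i).IsHermitian := by
    intro U
    exact Finset.sum_induction _ _ (fun a b ha hb => ha.add hb) isHermitian_zero
      fun i _ => (hI i).1
  have hAS : (Ix + ∑ i ∈ S, I i).IsHermitian := hIx.1.add (hSum S)
  have hAT : (Ix + ∑ i ∈ T, I i).IsHermitian := hIx.1.add (hSum T)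
  have hrw : ∀ (U : Finset ι), j ∉ U →
      Ix + ∑ i ∈ insert j U, I i = (Ix + ∑ i ∈ U, I i) + I j := by
    intro U hjU
    rw [Finset.sum_insert hjU]
    abel
  have hub : fE (insert j T) - fE T ≤ lambdaMax (I j) := by
    rw [hfE, hfE, hrw T hjT]
    have := lambdaMin_add_le hAT (hj.1)
    linarith
  have hlb : lambdaMin (I j) ≤ fE (insert j S) - fE S := by
    rw [hfE, hfE, hrw S hjS]
    have := lambdaMin_add_ge hAS (hj.1)
    linarith
  have hmin : 0 < lambdaMin (I j) := lambdaMin_pos hj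
  have hmax : lambdaMin (I j) ≤ lambdaMax (I j) := lambdaMin_le_lambdaMax hj.1
  have hr : 0 ≤ lambdaMax (I j) / lambdaMin (I j) :=
    div_nonneg (hmin.le.trans hmax) hmin.le
  calc fE (insert j T) - fE T ≤ lambdaMax (I j) := hub
    _ = (lambdaMax (I j) / lambdaMin (I j)) * lambdaMin (I j) := by
        field_simp
    _ ≤ (lambdaMax (I j) / lambdaMin (I j)) * (fE (insert j S) - fE S) :=
        mul_le_mul_of_nonneg_left hlb hr
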